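/- Define φ₊(z) = [[√a₀, a₁ + a₂z + a₃z² + a₄z³],[z, −√a₀]] and φ₋(z) = [[−√a₀, a₁ + a₂z + a₃z² + a₄z³],[z, √a₀]] for complex numbers a₀,...,a₄ with a₀ ≠ 0. Then there is no matrix ψ = [[d, e(z)],[0, f]] with d, f ∈ ℂ* and e a polynomial of degree ≤ 1 such that ψφ₊ψ⁻¹ = φ₋ as matrices of polynomials. -/
import Mathlib


open Polynomial Matrix

/-- With `s = √a₀` a square root of `a₀ ≠ 0`, let
`φ₊ = [[s, a₁ + a₂z + a₃z² + a₄z³],[z, −s]]` and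
`φ₋ = [[−s, a₁ + a₂z + a₃z² + a₄z³],[z, s]]`.
Then there is no matrix `ψ = [[d, e(z)],[0, f]]` with `d, f ∈ ℂ*` and `e` a polynomial
of degree ≤ 1 such that `ψφ₊ψ⁻¹ = φ₋` as matrices of polynomials. -/
theorem stmt_7 (a₀ a₁ a₂ a₃ a₄ s : ℂ) (hs : s ^ 2 = a₀) (h₀ : a₀ ≠ 0) :
    ¬ ∃ (d f : ℂ) (e : Polynomial ℂ), d ≠ 0 ∧ f ≠ 0 ∧ e.degree ≤ 1 ∧
      (!![C d, e; 0, C f] : Matrix (Fin 2) (Fin 2) (Polynomial ℂ)) *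
          !![C s, C a₁ + C a₂ * X + C a₃ * X ^ 2 + C a₄ * X ^ 3; X, -C s] *
          (!![C d, e; 0, C f] : Matrix (Fin 2) (Fin 2) (Polynomial ℂ))⁻¹
        = !![-C s, C a₁ + C a₂ * X + C a₃ * X ^ 2 + C a₄ * X ^ 3; X, C s] := by
  rintro ⟨d, f, e, hd, hf, hdeg, heq⟩
  have hsne : s ≠ 0 := fun h => h₀ (by rw [← hs, h]; ring)
  set ψ : Matrix (Fin 2) (Fin 2) (Polynomial ℂ) := !![C d, e; 0, C f] with hψ
  have hdet : IsUnit ψ.det := by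
    have : ψ.det = C d * C f := by simp [hψ, Matrix.det_fin_two_of]
    rw [this]
    exact (isUnit_C.mpr hd.isUnit).mul (isUnit_C.mpr hf.isUnit)
  have h : ψ * !![C s, C a₁ + C a₂ * X + C a₃ * X ^ 2 + C a₄ * X ^ 3; X, -C s]
      = !![-C s, C a₁ + C a₂ * X + C a₃ * X ^ 2 + C a₄ * X ^ 3; X, C s] * ψ := by
    have := congrArg (· * ψ) heq
    simpa [Matrix.mul_assoc, Matrix.nonsing_inv_mul _ hdet] using this
  have h00 : C d * C s + e * X = -(C s * C d) := by
    have := congrFun (congrFun h 0) 0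
    simpa [hψ, Matrix.mul_apply, Fin.sum_univ_two] using this
  have hc := congrArg (fun p => Polynomial.coeff p 0) h00
  simp [mul_coeff_zero] at hc
  have hsd : s * d = 0 := by linear_combination hc / 2
  rcases mul_eq_zero.mp hsd with h1 | h1
  · exact hsne h1
  · exact hd h1
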